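/- The rational function ψ(x) = ((2+√3)·((√3-1)x² + 2√3·x + 6))/((√3 + 3 - x)²) satisfies, for every integer k ≥ 1 and every x < 3 + √3, ψ^{(k)}(x) = 6·k!·((12k-3) + √3(7k-2) + (3+2√3)x)/((√3+3-x)^{k+2}); consequently ψ^{(k)}(x) ≥ 0 for all k ≥ 0 and all x ∈ [-1-√3, 0]. -/

import Mathlib

private lemma aux_hasDerivAt (s A B : ℝ) (n : ℕ) (x : ℝ) (hu : s + 3 - x ≠ 0) :
    HasDerivAt (fun y => (A + B * y) / (s + 3 - y) ^ (n + 2))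
      ((B * (s + 3 - x) + ((n : ℝ) + 2) * (A + B * x)) / (s + 3 - x) ^ (n + 3)) x := by
  have h1 : HasDerivAt (fun y : ℝ => s + 3 - y) (-1) x := by
    simpa using (hasDerivAt_id x).const_sub (s + 3)
  have h2 : HasDerivAt (fun y : ℝ => (s + 3 - y) ^ (n + 2))
      (((n : ℝ) + 2) * (s + 3 - x) ^ (n + 1) * (-1)) x := by
    have := h1.pow (n + 2)
    norm_num at this
    refine this.congr_deriv (Eq.symm ?_)
    ring
  have h3 : HasDerivAt (fun y : ℝ => A + B * y) B x := by
    simpa using ((hasDerivAt_id x).const_mul B).const_add A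
  have h4 := h3.div h2 (pow_ne_zero _ hu)
  refine h4.congr_deriv (Eq.symm ?_)
  field_simp
  ring

private lemma psi_base (x : ℝ) (hu : Real.sqrt 3 + 3 - x ≠ 0) :
    HasDerivAt (fun y => (2 + Real.sqrt 3) * ((Real.sqrt 3 - 1) * y ^ 2 + 2 * Real.sqrt 3 * y + 6) /
        (Real.sqrt 3 + 3 - y) ^ 2)
      ((54 + 30 * Real.sqrt 3 + (18 + 12 * Real.sqrt 3) * x) / (Real.sqrt 3 + 3 - x) ^ 3) x := by
  set s := Real.sqrt 3 with hsdef
  have hs : s ^ 2 = 3 := Real.sq_sqrt (by norm_num)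
  have hN : HasDerivAt (fun y => (2 + s) * ((s - 1) * y ^ 2 + 2 * s * y + 6))
      ((2 + s) * ((s - 1) * (2 * x) + 2 * s)) x := by
    have h0 : HasDerivAt (fun y : ℝ => (s - 1) * y ^ 2 + 2 * s * y + 6)
        ((s - 1) * (2 * x) + 2 * s) x := by
      have := (((hasDerivAt_pow 2 x).const_mul (s - 1)).add
        ((hasDerivAt_id x).const_mul (2 * s))).add_const 6
      refine this.congr_deriv (Eq.symm ?_)
      push_cast
      ring
    exact h0.const_mul (2 + s)
  have hD : HasDerivAt (fun y : ℝ => (s + 3 - y) ^ 2) (2 * (s + 3 - x) * (-1)) x := by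
    have h1 : HasDerivAt (fun y : ℝ => s + 3 - y) (-1) x := by
      simpa using (hasDerivAt_id x).const_sub (s + 3)
    have := h1.pow 2
    refine this.congr_deriv (Eq.symm ?_)
    push_cast
    ring
  have h := hN.div hD (pow_ne_zero 2 hu)
  refine h.congr_deriv (Eq.symm ?_)
  rw [div_eq_div_iff (pow_ne_zero 3 hu) (pow_ne_zero 2 (pow_ne_zero 2 hu))]
  linear_combination (-(2*s+10)*(1+x)*(s+3-x)^4) * hs

private lemma psi_formula (k : ℕ) (hk : 1 ≤ k) (x : ℝ) (hx : x < 3 + Real.sqrt 3) :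
    iteratedDeriv k (fun x => (2 + Real.sqrt 3) * ((Real.sqrt 3 - 1) * x ^ 2 + 2 * Real.sqrt 3 * x + 6) /
        (Real.sqrt 3 + 3 - x) ^ 2) x =
      6 * (k.factorial : ℝ) *
          ((12 * (k : ℝ) - 3) + Real.sqrt 3 * (7 * (k : ℝ) - 2) + (3 + 2 * Real.sqrt 3) * x) /
        (Real.sqrt 3 + 3 - x) ^ (k + 2) := by
  induction k generalizing x with
  | zero => omega
  | succ n ih =>
    set s := Real.sqrt 3 with hsdef
    have hs : s ^ 2 = 3 := Real.sq_sqrt (by norm_num)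
    have hu : s + 3 - x ≠ 0 := by intro h; rw [hsdef] at h; linarith
    rcases Nat.eq_zero_or_pos n with hn | hn
    · subst hn
      rw [iteratedDeriv_one, (psi_base x hu).deriv]
      norm_num [Nat.factorial]
      ring
    · rw [iteratedDeriv_succ]
      set A : ℝ := 6 * (n.factorial : ℝ) * ((12 * (n : ℝ) - 3) + s * (7 * (n : ℝ) - 2)) with hA
      set B : ℝ := 6 * (n.factorial : ℝ) * (3 + 2 * s) with hB
      have heq : (iteratedDeriv n (fun x => (2 + s) * ((s - 1) * x ^ 2 + 2 * s * x + 6) /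
          (s + 3 - x) ^ 2)) =ᶠ[nhds x] (fun y => (A + B * y) / (s + 3 - y) ^ (n + 2)) := by
        filter_upwards [Iio_mem_nhds hx] with y hy
        rw [ih hn y hy, hA, hB]
        ring
      rw [heq.deriv_eq, (aux_hasDerivAt s A B n x hu).deriv]
      rw [div_eq_div_iff (pow_ne_zero _ hu) (pow_ne_zero _ hu)]
      rw [hA, hB]
      push_cast [Nat.factorial_succ]
      linear_combination (12 * (n.factorial : ℝ) * (s + 3 - x) ^ (n + 3)) * hs
private lemma psi_nonneg (k : ℕ) (x : ℝ) (hx1 : -1 - Real.sqrt 3 ≤ x) (hx2 : x ≤ 0) :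
    0 ≤ iteratedDeriv k (fun x => (2 + Real.sqrt 3) * ((Real.sqrt 3 - 1) * x ^ 2 + 2 * Real.sqrt 3 * x + 6) /
        (Real.sqrt 3 + 3 - x) ^ 2) x := by
  have hs : Real.sqrt 3 ^ 2 = 3 := Real.sq_sqrt (by norm_num)
  have hs0 : 0 ≤ Real.sqrt 3 := Real.sqrt_nonneg 3
  have hs1 : (3:ℝ)/2 < Real.sqrt 3 := by nlinarith
  rcases Nat.eq_zero_or_pos k with hk | hk
  · subst hk
    rw [iteratedDeriv_zero]
    apply div_nonneg _ (by positivity)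
    apply mul_nonneg (by linarith)
    have h1 : (0:ℝ) < Real.sqrt 3 - 1 := by linarith
    nlinarith [sq_nonneg ((Real.sqrt 3 - 1) * x + Real.sqrt 3), h1, hs]
  · rw [psi_formula k hk x (by linarith)]
    have hu : (0:ℝ) < Real.sqrt 3 + 3 - x := by linarith
    apply div_nonneg _ (le_of_lt (pow_pos hu _))
    have hk1 : (1:ℝ) ≤ (k:ℝ) := by exact_mod_cast hk
    have hp1 : (0:ℝ) ≤ (3 + 2 * Real.sqrt 3) * (x + 1 + Real.sqrt 3) := by
      apply mul_nonneg <;> linarith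
    have hp2 : (0:ℝ) ≤ ((k:ℝ) - 1) * Real.sqrt 3 := by
      apply mul_nonneg <;> linarith
    apply mul_nonneg (by positivity)
    nlinarith [hp1, hp2, hs, hk1]

/-- For the optimal function `ψ` in `Π_{2/2,3}`:
`ψ(x) = (2+√3)((√3-1)x² + 2√3 x + 6)/(√3+3-x)²`, one has for all `k ≥ 1` and
`x < 3 + √3` the explicit derivative formula, and consequently
`ψ^{(k)}(x) ≥ 0` for all `k ≥ 0` and all `x ∈ [-1-√3, 0]`. -/
theorem psi_233_derivatives :
    let ψ : ℝ → ℝ := fun x =>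
      (2 + Real.sqrt 3) * ((Real.sqrt 3 - 1) * x ^ 2 + 2 * Real.sqrt 3 * x + 6) /
        (Real.sqrt 3 + 3 - x) ^ 2
    (∀ (k : ℕ), 1 ≤ k → ∀ x : ℝ, x < 3 + Real.sqrt 3 →
      iteratedDeriv k ψ x =
        6 * (k.factorial : ℝ) *
          ((12 * (k : ℝ) - 3) + Real.sqrt 3 * (7 * (k : ℝ) - 2) +
            (3 + 2 * Real.sqrt 3) * x) /
          (Real.sqrt 3 + 3 - x) ^ (k + 2)) ∧
    (∀ (k : ℕ) (x : ℝ), -1 - Real.sqrt 3 ≤ x → x ≤ 0 →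
      0 ≤ iteratedDeriv k ψ x) := by
  intro ψ
  exact ⟨fun k hk x hx => psi_formula k hk x hx, fun k x h1 h2 => psi_nonneg k x h1 h2⟩
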